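/- Let p and q be distinct primes and set ξ = log q / log p (a positive irrational real number). Assume (a,b) ∈ 𝒩 is a boundary point for ξ, and set α = p^a/q^b. Suppose A = (p^{a₁}/q^{b₁},…,p^{a_N}/q^{b_N}) ∈ ℱ(α) and t > 0 are such that f_A(t) ≤ f_B(t) for every factorization B ∈ ℱ(α). Then (aₙ,bₙ) is a boundary point for ξ for every 1 ≤ n ≤ N. -/

import Mathlib

open Real Finset

/-- `𝒩` is encoded by pairs `x : ℕ × ℕ` with `x ≠ (0,0)`.
The upper set `𝒰(ξ) = {(a,b) ∈ 𝒩 : a > bξ}`. -/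
def Uset (ξ : ℝ) : Set (ℕ × ℕ) := {x | x ≠ (0, 0) ∧ (x.2 : ℝ) * ξ < (x.1 : ℝ)}

/-- The lower set `ℒ(ξ) = {(a,b) ∈ 𝒩 : a < bξ}`. -/
def Lset (ξ : ℝ) : Set (ℕ × ℕ) := {x | x ≠ (0, 0) ∧ (x.1 : ℝ) < (x.2 : ℝ) * ξ}

/-- `𝒢 = {(a,b) ∈ 𝒩 : gcd(a,b) = 1}`. -/
def Gset : Set (ℕ × ℕ) := {x | x ≠ (0, 0) ∧ Nat.Coprime x.1 x.2}

/-- `𝒰₁(ξ)`: elements `(a,b)` of `𝒰(ξ)` with `a/b ≤ m/n` (by cross multiplication)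
for every `(m,n) ∈ 𝒰(ξ)` with `m ≤ a`. -/
def U1 (ξ : ℝ) : Set (ℕ × ℕ) :=
  {x | x ∈ Uset ξ ∧ ∀ y ∈ Uset ξ, y.1 ≤ x.1 → x.1 * y.2 ≤ y.1 * x.2}

/-- `𝒰₂(ξ)`: elements `(a,b)` of `𝒰(ξ)` with `a/b ≤ m/n` for every `(m,n) ∈ 𝒰(ξ)`
with `n ≤ b`. -/
def U2 (ξ : ℝ) : Set (ℕ × ℕ) :=
  {x | x ∈ Uset ξ ∧ ∀ y ∈ Uset ξ, y.2 ≤ x.2 → x.1 * y.2 ≤ y.1 * x.2}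

/-- `ℒ₁(ξ)`: elements `(a,b)` of `ℒ(ξ)` with `a/b ≥ m/n` for every `(m,n) ∈ ℒ(ξ)`
with `m ≤ a`. -/
def L1 (ξ : ℝ) : Set (ℕ × ℕ) :=
  {x | x ∈ Lset ξ ∧ ∀ y ∈ Lset ξ, y.1 ≤ x.1 → y.1 * x.2 ≤ x.1 * y.2}

/-- `ℒ₂(ξ)`: elements `(a,b)` of `ℒ(ξ)` with `a/b ≥ m/n` for every `(m,n) ∈ ℒ(ξ)`
with `n ≤ b`. -/
def L2 (ξ : ℝ) : Set (ℕ × ℕ) :=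
  {x | x ∈ Lset ξ ∧ ∀ y ∈ Lset ξ, y.2 ≤ x.2 → y.1 * x.2 ≤ x.1 * y.2}

/-- `(a,b)` is an upper or lower best approximation for `ξ`. -/
def BestApprox (ξ : ℝ) (x : ℕ × ℕ) : Prop :=
  x ∈ Gset ∩ U1 ξ ∨ x ∈ Gset ∩ L2 ξ

/-- A factorization of a positive rational `α ≠ 1`: a tuple of fractions `r n / s n` of
positive integers, none equal to `1`, with `gcd (r m) (s n) = 1` for all `m, n`, whose
product is `α`. -/
def IsFactorization (α : ℚ) {N : ℕ} (r s : Fin N → ℕ) : Prop :=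
  (∀ n, 0 < r n) ∧ (∀ n, 0 < s n) ∧ (∀ n, (r n : ℚ) / (s n : ℚ) ≠ 1) ∧
    (∀ m n, Nat.Coprime (r m) (s n)) ∧ (∏ n, (r n : ℚ) / (s n : ℚ)) = α

/-- The measure function `f_A(t) = (Σₙ m(rₙ/sₙ)^t)^{1/t}` of a factorization, where
`m(rₙ/sₙ) = log max(rₙ, sₙ)`. -/
noncomputable def fmeas {N : ℕ} (r s : Fin N → ℕ) (t : ℝ) : ℝ :=
  (∑ n, (Real.log ((max (r n) (s n) : ℕ) : ℝ)) ^ t) ^ (1 / t)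

/-- `(a,b)` is an upper boundary point for `ξ`: `(a,b) ∈ 𝒰(ξ)` and `(a,b+1) ∈ ℒ(ξ)`. -/
def UpperBoundary (ξ : ℝ) (x : ℕ × ℕ) : Prop :=
  x ∈ Uset ξ ∧ (x.1, x.2 + 1) ∈ Lset ξ

/-- `(a,b)` is a lower boundary point for `ξ`: `(a,b) ∈ ℒ(ξ)` and `(a+1,b) ∈ 𝒰(ξ)`. -/
def LowerBoundary (ξ : ℝ) (x : ℕ × ℕ) : Prop :=
  x ∈ Lset ξ ∧ (x.1 + 1, x.2) ∈ Uset ξ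

/-- `(a,b)` is a boundary point for `ξ`. -/
def Boundary (ξ : ℝ) (x : ℕ × ℕ) : Prop :=
  UpperBoundary ξ x ∨ LowerBoundary ξ x


lemma aux_pow_ne {p q : ℕ} (hp : p.Prime) (hq : q.Prime) (hpq : p ≠ q)
    (c d : ℕ) (h : (c, d) ≠ (0, 0)) : p ^ c ≠ q ^ d := by
  intro he
  rcases Nat.eq_zero_or_pos c with hc | hc
  · rcases Nat.eq_zero_or_pos d with hd | hd
    · exact h (by simp [hc, hd])
    · subst hc
      have h1 : 1 < q ^ d := Nat.one_lt_pow (by omega) hq.one_lt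
      simp at he; omega
  · have hpd : p ∣ q ^ d := he ▸ dvd_pow_self p hc.ne'
    rcases Nat.eq_zero_or_pos d with hd | hd
    · subst hd
      have h1 : 1 < p ^ c := Nat.one_lt_pow hc.ne' hp.one_lt
      simp only [pow_zero] at he; omega
    · exact hpq ((Nat.prime_dvd_prime_iff_eq hp hq).mp (hp.dvd_of_dvd_pow hpd))

lemma aux_lt_iffU {p q : ℕ} (hp : p.Prime) (hq : q.Prime) (c d : ℕ) :
    ((d : ℝ) * (Real.log q / Real.log p) < c) ↔ q ^ d < p ^ c := by
  have hlp : 0 < Real.log p := Real.log_pos (by exact_mod_cast hp.one_lt)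
  have hlq : 0 < Real.log q := Real.log_pos (by exact_mod_cast hq.one_lt)
  rw [mul_div_assoc', mul_comm, div_lt_iff₀ hlp, mul_comm (Real.log _)]
  rw [show (d:ℝ) * Real.log q = Real.log ((q:ℝ) ^ d) by rw [Real.log_pow],
      show (c:ℝ) * Real.log p = Real.log ((p:ℝ) ^ c) by rw [Real.log_pow]]
  rw [Real.log_lt_log_iff (pow_pos (by exact_mod_cast hq.pos) d) (pow_pos (by exact_mod_cast hp.pos) c)]
  constructor <;> intro h <;> exact_mod_cast h

lemma aux_lt_iffL {p q : ℕ} (hp : p.Prime) (hq : q.Prime) (c d : ℕ) :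
    ((c : ℝ) < (d : ℝ) * (Real.log q / Real.log p)) ↔ p ^ c < q ^ d := by
  have hlp : 0 < Real.log p := Real.log_pos (by exact_mod_cast hp.one_lt)
  have hlq : 0 < Real.log q := Real.log_pos (by exact_mod_cast hq.one_lt)
  rw [mul_div_assoc', mul_comm, lt_div_iff₀ hlp, mul_comm (Real.log _)]
  rw [show (d:ℝ) * Real.log q = Real.log ((q:ℝ) ^ d) by rw [Real.log_pow],
      show (c:ℝ) * Real.log p = Real.log ((p:ℝ) ^ c) by rw [Real.log_pow]]
  rw [Real.log_lt_log_iff (pow_pos (by exact_mod_cast hp.pos) c) (pow_pos (by exact_mod_cast hq.pos) d)]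
  constructor <;> intro h <;> exact_mod_cast h

lemma aux_tri {p q : ℕ} (hp : p.Prime) (hq : q.Prime) (hpq : p ≠ q) (c d : ℕ)
    (h : (c, d) ≠ (0, 0)) :
    ((d : ℝ) * (Real.log q / Real.log p) < c) ∨ ((c : ℝ) < (d : ℝ) * (Real.log q / Real.log p)) := by
  rcases lt_trichotomy (q ^ d) (p ^ c) with h1 | h1 | h1
  · exact Or.inl ((aux_lt_iffU hp hq c d).mpr h1)
  · exact absurd h1.symm (aux_pow_ne hp hq hpq c d h)
  · exact Or.inr ((aux_lt_iffL hp hq c d).mpr h1)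

lemma aux_prod_pow {p q : ℕ} {M : ℕ} (C D : Fin M → ℕ) :
    (∏ i, (((p ^ C i : ℕ) : ℚ) / ((q ^ D i : ℕ) : ℚ)))
      = (p : ℚ) ^ (∑ i, C i) / (q : ℚ) ^ (∑ i, D i) := by
  rw [Finset.prod_div_distrib]
  push_cast
  rw [Finset.prod_pow_eq_pow_sum, Finset.prod_pow_eq_pow_sum]

lemma aux_build {p q : ℕ} (hp : p.Prime) (hq : q.Prime) (hpq : p ≠ q)
    (a b : ℕ) {M : ℕ} (C D : Fin M → ℕ)
    (hpair : ∀ i, (C i, D i) ≠ (0, 0)) (hC : ∑ i, C i = a) (hD : ∑ i, D i = b) :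
    IsFactorization ((p : ℚ) ^ a / (q : ℚ) ^ b) (fun i => p ^ C i) (fun i => q ^ D i) := by
  have hq0 : ∀ d : ℕ, ((q ^ d : ℕ) : ℚ) ≠ 0 := fun d => Nat.cast_ne_zero.mpr (pow_pos hq.pos d).ne'
  refine ⟨fun i => pow_pos hp.pos _, fun i => pow_pos hq.pos _, ?_, ?_, ?_⟩
  · intro i hone
    rw [div_eq_one_iff_eq (hq0 _)] at hone
    exact aux_pow_ne hp hq hpq _ _ (hpair i) (by exact_mod_cast hone)
  · exact fun m n => Nat.Coprime.pow _ _ ((Nat.coprime_primes hp hq).mpr hpq)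
  · rw [aux_prod_pow, hC, hD]

lemma aux_sums {p q : ℕ} (hp : p.Prime) (hq : q.Prime) (hpq : p ≠ q)
    (a b : ℕ) {N : ℕ} (A B : Fin N → ℕ)
    (hprod : (∏ i, (((p ^ A i : ℕ) : ℚ) / ((q ^ B i : ℕ) : ℚ)))
      = (p : ℚ) ^ a / (q : ℚ) ^ b) :
    (∑ i, A i) = a ∧ (∑ i, B i) = b := by
  rw [aux_prod_pow] at hprod
  have hp0 : (p : ℚ) ≠ 0 := by exact_mod_cast hp.pos.ne'
  have hq0 : (q : ℚ) ≠ 0 := by exact_mod_cast hq.pos.ne'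
  rw [div_eq_div_iff (pow_ne_zero _ hq0) (pow_ne_zero _ hq0)] at hprod
  have hN : p ^ (∑ i, A i) * q ^ b = p ^ a * q ^ (∑ i, B i) := by exact_mod_cast hprod
  have h1 := congrArg (fun n => n.factorization p) hN
  have h2 := congrArg (fun n => n.factorization q) hN
  simp only [Nat.factorization_mul (pow_ne_zero _ hp.pos.ne') (pow_ne_zero _ hq.pos.ne'),
    hp.factorization_pow, hq.factorization_pow, Finsupp.add_apply, Finsupp.single_apply,
    hpq, Ne.symm hpq, if_true, if_false, eq_self_iff_true] at h1 h2
  simp at h1 h2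
  omega

lemma aux_v_nonneg {p q : ℕ} (hp : p.Prime) (c d : ℕ) :
    0 ≤ Real.log ((max (p ^ c) (q ^ d) : ℕ) : ℝ) := by
  apply Real.log_nonneg
  have h : 1 ≤ max (p ^ c) (q ^ d) := le_trans (Nat.one_le_pow _ _ hp.pos) (le_max_left _ _)
  exact_mod_cast h

lemma aux_step {p q : ℕ} (hp : p.Prime) (hq : q.Prime) (hpq : p ≠ q)
    (a b : ℕ) (t : ℝ) (ht : 0 < t)
    {N : ℕ} (A B : Fin N → ℕ) (m : Fin N)
    (A' B' : Fin N → ℕ)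
    (hpairs : ∀ i, i ≠ m → (A' i, B' i) ≠ (0, 0))
    (hsA : ∑ i, A' i = a) (hsB : ∑ i, B' i = b)
    (hle : ∀ i, Real.log ((max (p ^ A' i) (q ^ B' i) : ℕ) : ℝ)
        ≤ Real.log ((max (p ^ A i) (q ^ B i) : ℕ) : ℝ))
    (hm : Real.log ((max (p ^ A' m) (q ^ B' m) : ℕ) : ℝ)
        < Real.log ((max (p ^ A m) (q ^ B m) : ℕ) : ℝ))
    (hmin : ∀ (M : ℕ) (r s : Fin M → ℕ),
      IsFactorization ((p : ℚ) ^ a / (q : ℚ) ^ b) r s →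
      fmeas (fun n => p ^ A n) (fun n => q ^ B n) t ≤ fmeas r s t) : False := by
  set v' : Fin N → ℝ := fun i => Real.log ((max (p ^ A' i) (q ^ B' i) : ℕ) : ℝ) with hv'
  set v : Fin N → ℝ := fun i => Real.log ((max (p ^ A i) (q ^ B i) : ℕ) : ℝ) with hv
  have hv'nn : ∀ i, 0 ≤ v' i := fun i => aux_v_nonneg hp _ _
  have hSlt : (∑ i, (v' i) ^ t) < ∑ i, (v i) ^ t := by
    refine Finset.sum_lt_sum (fun i _ => Real.rpow_le_rpow (hv'nn i) (hle i) ht.le)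
      ⟨m, Finset.mem_univ m, Real.rpow_lt_rpow (hv'nn m) hm ht⟩
  have hSnn : 0 ≤ ∑ i, (v' i) ^ t :=
    Finset.sum_nonneg fun i _ => Real.rpow_nonneg (hv'nn i) t
  have hlt : (∑ i, (v' i) ^ t) ^ (1 / t) < (∑ i, (v i) ^ t) ^ (1 / t) :=
    Real.rpow_lt_rpow hSnn hSlt (by positivity)
  have hfm : fmeas (fun n => p ^ A n) (fun n => q ^ B n) t = (∑ i, (v i) ^ t) ^ (1 / t) := rfl
  by_cases h0 : (A' m, B' m) = (0, 0)
  · -- drop index m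
    rw [Prod.mk.injEq] at h0
    cases N with
    | zero => exact m.elim0
    | succ N1 =>
      have hsC : ∑ i : Fin N1, A' (m.succAbove i) = a := by
        have h := Fin.sum_univ_succAbove A' m
        omega
      have hsD : ∑ i : Fin N1, B' (m.succAbove i) = b := by
        have h := Fin.sum_univ_succAbove B' m
        omega
      have hfact' := aux_build hp hq hpq a b
        (fun i => A' (m.succAbove i)) (fun i => B' (m.succAbove i))
        (fun i => hpairs _ (Fin.succAbove_ne m i)) hsC hsD
      have hmin' := hmin N1 _ _ hfact'
      have hfm2 : fmeas (fun i => p ^ A' (m.succAbove i)) (fun i => q ^ B' (m.succAbove i)) t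
          = (∑ i : Fin N1, (v' (m.succAbove i)) ^ t) ^ (1 / t) := rfl
      have hsplit : ∑ i : Fin (N1+1), (v' i) ^ t
          = (v' m) ^ t + ∑ i : Fin N1, (v' (m.succAbove i)) ^ t :=
        Fin.sum_univ_succAbove (fun i => (v' i) ^ t) m
      have hvm : v' m = 0 := by simp [hv', h0.1, h0.2]
      have hvmt : (v' m) ^ t = 0 := by rw [hvm]; exact Real.zero_rpow ht.ne'
      rw [hsplit, hvmt, zero_add] at hlt
      rw [hfm, hfm2] at hmin'
      linarith
  · have hfact' := aux_build hp hq hpq a b A' B'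
      (fun i => by rcases eq_or_ne i m with rfl | hi; exacts [h0, hpairs i hi]) hsA hsB
    have hmin' := hmin N _ _ hfact'
    have hfm2 : fmeas (fun n => p ^ A' n) (fun n => q ^ B' n) t
        = (∑ i, (v' i) ^ t) ^ (1 / t) := rfl
    rw [hfm, hfm2] at hmin'
    linarith

/-- Lemma `BoundaryPointFactorization`: if `(a,b)` is a boundary point
for `ξ = log q / log p` and a factorization of `p^a/q^b` attains the infimum in
`m_t(p^a/q^b)` over `ℱ(p^a/q^b)` for some `t > 0`, then every `(aₙ,bₙ)` is a boundary
point for `ξ`. -/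
theorem stmt_17 (p q : ℕ) (hp : p.Prime) (hq : q.Prime) (hpq : p ≠ q)
    (ξ : ℝ) (hξ : ξ = Real.log q / Real.log p)
    (a b : ℕ) (hbd : Boundary ξ (a, b))
    (N : ℕ) (A B : Fin N → ℕ)
    (hfact : IsFactorization ((p : ℚ) ^ a / (q : ℚ) ^ b)
      (fun n => p ^ A n) (fun n => q ^ B n))
    (t : ℝ) (ht : 0 < t)
    (hmin : ∀ (M : ℕ) (r s : Fin M → ℕ),
      IsFactorization ((p : ℚ) ^ a / (q : ℚ) ^ b) r s →
      fmeas (fun n => p ^ A n) (fun n => q ^ B n) t ≤ fmeas r s t) :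
    ∀ n : Fin N, Boundary ξ (A n, B n) := by
  subst hξ
  obtain ⟨hrpos, hspos, hne1, hcopf, hprod⟩ := hfact
  have hsums := aux_sums hp hq hpq a b A B hprod
  have hxy : ∀ i, (A i, B i) ≠ (0, 0) := by
    intro i h
    rw [Prod.mk.injEq] at h
    exact hne1 i (by simp [h.1, h.2])
  have hlp : 0 < Real.log p := Real.log_pos (by exact_mod_cast hp.one_lt)
  have hlq : 0 < Real.log q := Real.log_pos (by exact_mod_cast hq.one_lt)
  set ξ := Real.log q / Real.log p with hxidef
  have hξpos : 0 < ξ := div_pos hlq hlp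
  have hab1 : (a : ℝ) < (b : ℝ) * ξ + ξ := by
    rcases hbd with ⟨hU, hL⟩ | ⟨hL, hU⟩
    · have h := hL.2
      push_cast at h
      nlinarith
    · have h := hL.2
      push_cast at h
      nlinarith
  have hab2 : (b : ℝ) * ξ < (a : ℝ) + 1 := by
    rcases hbd with ⟨hU, hL⟩ | ⟨hL, hU⟩
    · have h := hU.2
      push_cast at h
      nlinarith
    · have h := hU.2
      push_cast at h
      nlinarith
  intro n
  by_contra hnb
  rcases aux_tri hp hq hpq (A n) (B n) (hxy n) with h1 | h1
  · -- (A n, B n) in the upper set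
    have h2 : (B n : ℝ) * ξ + ξ < (A n : ℝ) := by
      rcases aux_tri hp hq hpq (A n) (B n + 1) (by simp) with h2 | h2
      · push_cast at h2
        nlinarith
      · exfalso
        apply hnb
        left
        refine ⟨⟨hxy n, h1⟩, ⟨by simp, ?_⟩⟩
        push_cast
        push_cast at h2
        exact h2
    have hex : ∃ m, (A m : ℝ) < (B m : ℝ) * ξ := by
      by_contra hcon
      push_neg at hcon
      have hsum : ∑ i, ((A i : ℝ) - (B i : ℝ) * ξ) = (a : ℝ) - (b : ℝ) * ξ := by
        rw [Finset.sum_sub_distrib, ← Finset.sum_mul, ← Nat.cast_sum, ← Nat.cast_sum,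
          hsums.1, hsums.2]
      have hge : (A n : ℝ) - (B n : ℝ) * ξ ≤ ∑ i, ((A i : ℝ) - (B i : ℝ) * ξ) :=
        Finset.single_le_sum (fun i _ => sub_nonneg.mpr (hcon i)) (Finset.mem_univ n)
      rw [hsum] at hge
      linarith
    obtain ⟨m, hmL⟩ := hex
    have hmn : m ≠ n := by
      rintro rfl
      linarith
    have hBm : 0 < B m := by
      rcases Nat.eq_zero_or_pos (B m) with h | h
      · exfalso
        rw [h, Nat.cast_zero, zero_mul] at hmL
        exact absurd hmL (not_lt.mpr (Nat.cast_nonneg _))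
      · exact h
    set B' : Fin N → ℕ := fun i => if i = m then B m - 1 else if i = n then B n + 1 else B i
      with hB'def
    have hB'm : B' m = B m - 1 := by simp [hB'def]
    have hB'n : B' n = B n + 1 := by simp [hB'def, hmn.symm]
    have hB'other : ∀ i, i ≠ m → i ≠ n → B' i = B i := by
      intro i h1' h2'
      simp [hB'def, h1', h2']
    have e1 : ∀ f : Fin N → ℕ,
        ∑ i, f i = f m + (f n + ∑ i ∈ (Finset.univ.erase m).erase n, f i) := by
      intro f
      rw [Finset.add_sum_erase _ f
        (Finset.mem_erase.mpr ⟨hmn.symm, Finset.mem_univ n⟩)]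
      rw [Finset.add_sum_erase _ f (Finset.mem_univ m)]
    have hrest : ∑ i ∈ (Finset.univ.erase m).erase n, B' i
        = ∑ i ∈ (Finset.univ.erase m).erase n, B i :=
      Finset.sum_congr rfl (fun i hi => by
        rw [Finset.mem_erase, Finset.mem_erase] at hi
        exact hB'other i hi.2.1 hi.1)
    have hsB' : ∑ i, B' i = b := by
      have ha1 := e1 B'
      have ha2 := e1 B
      have hb2 := hsums.2
      omega
    have hqp2 : q ^ (B n + 1) < p ^ A n := by
      refine (aux_lt_iffU hp hq (A n) (B n + 1)).mp ?_
      push_cast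
      nlinarith
    have hqp1 : q ^ B n < p ^ A n := (aux_lt_iffU hp hq (A n) (B n)).mp h1
    have hpq2 : p ^ A m < q ^ B m := (aux_lt_iffL hp hq (A m) (B m)).mp hmL
    have hmstrict : Real.log ((max (p ^ A m) (q ^ B' m) : ℕ) : ℝ)
        < Real.log ((max (p ^ A m) (q ^ B m) : ℕ) : ℝ) := by
      rw [max_eq_right hpq2.le]
      apply Real.log_lt_log
      · exact_mod_cast Nat.lt_of_lt_of_le (pow_pos hp.pos (A m)) (le_max_left _ _)
      · have hmax : max (p ^ A m) (q ^ B' m) < q ^ B m := by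
          refine max_lt hpq2 ?_
          rw [hB'm]
          exact Nat.pow_lt_pow_right hq.one_lt (by omega)
        exact_mod_cast hmax
    refine aux_step hp hq hpq a b t ht A B m A B' ?_ hsums.1 hsB' ?_ hmstrict hmin
    · intro i hi
      rcases eq_or_ne i n with rfl | hin
      · rw [hB'n]
        simp
      · rw [hB'other i hi hin]
        exact hxy i
    · intro i
      rcases eq_or_ne i m with rfl | him
      · exact hmstrict.le
      · rcases eq_or_ne i n with rfl | hin
        · rw [hB'n, max_eq_left hqp2.le, max_eq_left hqp1.le]
        · rw [hB'other i him hin]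
  · -- (A n, B n) in the lower set
    have h2 : (A n : ℝ) + 1 < (B n : ℝ) * ξ := by
      rcases aux_tri hp hq hpq (A n + 1) (B n) (by simp) with h2 | h2
      · exfalso
        apply hnb
        right
        refine ⟨⟨hxy n, h1⟩, ⟨by simp, ?_⟩⟩
        push_cast
        push_cast at h2
        exact h2
      · push_cast at h2
        nlinarith
    have hex : ∃ m, (B m : ℝ) * ξ < (A m : ℝ) := by
      by_contra hcon
      push_neg at hcon
      have hsum : ∑ i, ((B i : ℝ) * ξ - (A i : ℝ)) = (b : ℝ) * ξ - (a : ℝ) := by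
        rw [Finset.sum_sub_distrib, ← Finset.sum_mul, ← Nat.cast_sum, ← Nat.cast_sum,
          hsums.1, hsums.2]
      have hge : (B n : ℝ) * ξ - (A n : ℝ) ≤ ∑ i, ((B i : ℝ) * ξ - (A i : ℝ)) :=
        Finset.single_le_sum (fun i _ => sub_nonneg.mpr (hcon i)) (Finset.mem_univ n)
      rw [hsum] at hge
      linarith
    obtain ⟨m, hmU⟩ := hex
    have hmn : m ≠ n := by
      rintro rfl
      linarith
    have hAm : 0 < A m := by
      rcases Nat.eq_zero_or_pos (A m) with h | h
      · exfalso
        rw [h, Nat.cast_zero] at hmU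
        nlinarith [mul_nonneg (Nat.cast_nonneg (α := ℝ) (B m)) hξpos.le]
      · exact h
    set A' : Fin N → ℕ := fun i => if i = m then A m - 1 else if i = n then A n + 1 else A i
      with hA'def
    have hA'm : A' m = A m - 1 := by simp [hA'def]
    have hA'n : A' n = A n + 1 := by simp [hA'def, hmn.symm]
    have hA'other : ∀ i, i ≠ m → i ≠ n → A' i = A i := by
      intro i h1' h2'
      simp [hA'def, h1', h2']
    have e1 : ∀ f : Fin N → ℕ,
        ∑ i, f i = f m + (f n + ∑ i ∈ (Finset.univ.erase m).erase n, f i) := by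
      intro f
      rw [Finset.add_sum_erase _ f
        (Finset.mem_erase.mpr ⟨hmn.symm, Finset.mem_univ n⟩)]
      rw [Finset.add_sum_erase _ f (Finset.mem_univ m)]
    have hrest : ∑ i ∈ (Finset.univ.erase m).erase n, A' i
        = ∑ i ∈ (Finset.univ.erase m).erase n, A i :=
      Finset.sum_congr rfl (fun i hi => by
        rw [Finset.mem_erase, Finset.mem_erase] at hi
        exact hA'other i hi.2.1 hi.1)
    have hsA' : ∑ i, A' i = a := by
      have ha1 := e1 A'
      have ha2 := e1 A
      have hb2 := hsums.1
      omega
    have hpq2' : p ^ (A n + 1) < q ^ B n := by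
      refine (aux_lt_iffL hp hq (A n + 1) (B n)).mp ?_
      push_cast
      nlinarith
    have hpq1' : p ^ A n < q ^ B n := (aux_lt_iffL hp hq (A n) (B n)).mp h1
    have hqp2' : q ^ B m < p ^ A m := (aux_lt_iffU hp hq (A m) (B m)).mp hmU
    have hmstrict : Real.log ((max (p ^ A' m) (q ^ B m) : ℕ) : ℝ)
        < Real.log ((max (p ^ A m) (q ^ B m) : ℕ) : ℝ) := by
      rw [max_eq_left hqp2'.le]
      apply Real.log_lt_log
      · exact_mod_cast Nat.lt_of_lt_of_le (pow_pos hp.pos (A' m)) (le_max_left _ _)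
      · have hmax : max (p ^ A' m) (q ^ B m) < p ^ A m := by
          refine max_lt ?_ hqp2'
          rw [hA'm]
          exact Nat.pow_lt_pow_right hp.one_lt (by omega)
        exact_mod_cast hmax
    refine aux_step hp hq hpq a b t ht A B m A' B ?_ hsA' hsums.2 ?_ hmstrict hmin
    · intro i hi
      rcases eq_or_ne i n with rfl | hin
      · rw [hA'n]
        simp
      · rw [hA'other i hi hin]
        exact hxy i
    · intro i
      rcases eq_or_ne i m with rfl | him
      · exact hmstrict.le
      · rcases eq_or_ne i n with rfl | hin
        · rw [hA'n, max_eq_right hpq2'.le, max_eq_right hpq1'.le]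
        · rw [hA'other i him hin]
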